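/- Let n ≥ 1 and 0 ≤ t ≤ n. Let W_n be the group of permutations of {1,…,2n} commuting with the bar involution, and let H ≤ W_n be the stabilizer of the set {1,…,t}, so H is (isomorphic to) S_t × W_{n−t}. Let χ̄ : S_t → ℂ be a class function on the symmetric group S_t of {1,…,t}. Then for every σ ∈ W_n: ∑_{K ∈ C(t,σ)} χ̄(σ_K) = (1/|H|) · ∑_{τ ∈ W_n with τ⁻¹στ ∈ H} χ̄((τ⁻¹στ)|_{{1,…,t}}), where C(t,σ) is the set of properly admissible subsets K ⊆ {1,…,2n} with |K| = t and σ(K) = K; the right-hand side is the value at σ of the character of S_t × W_{n−t} given by χ̄ ⊠ 1 induced up to W_n. -/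

import Mathlib

open scoped Classical

/-- Given K ⊆ Fin m with |K| = t and σ(K) = K, the permutation σ_K = ι_K⁻¹ ∘ σ ∘ ι_K
of Fin t, where ι_K : Fin t → K is the order-preserving bijection (junk value `1`
if the hypotheses fail). -/
noncomputable def permOnSubset {m : ℕ} (t : ℕ) (σ : Equiv.Perm (Fin m))
    (K : Finset (Fin m)) : Equiv.Perm (Fin t) :=
  if h : K.card = t ∧ K.image σ = K then
    (K.orderIsoOfFin h.1).toEquiv.symm.permCongr
      (σ.subtypePerm (fun x => Iff.symm <| by
        constructor
        · intro hx
          rw [← h.2]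
          exact Finset.mem_image_of_mem σ hx
        · intro hx
          rw [← h.2] at hx
          obtain ⟨y, hy, hyx⟩ := Finset.mem_image.mp hx
          rwa [← σ.injective hyx]))
  else 1

/-- For π : Perm (Fin m) stabilizing {j : j < t}, the restriction of π to a
permutation of Fin t (junk value `1` if the hypotheses fail). -/
noncomputable def restrictPerm (m t : ℕ) (π : Equiv.Perm (Fin m)) :
    Equiv.Perm (Fin t) :=
  if h : t ≤ m ∧ ∀ j : Fin m, ((j : ℕ) < t ↔ ((π j : ℕ) < t)) then
    Equiv.permCongr (α' := {j : Fin m // (j : ℕ) < t}) (β' := Fin t)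
      { toFun := fun x => ⟨(x.1 : ℕ), x.2⟩
        invFun := fun j => ⟨⟨(j : ℕ), lt_of_lt_of_le j.2 h.1⟩, j.2⟩
        left_inv := fun _ => rfl
        right_inv := fun _ => rfl }
      (π.subtypePerm (fun j => (h.2 j).symm))
  else 1

/-! ### Auxiliary definitions and lemmas -/

lemma perm_apply_inv_self {α : Type*} (f : Equiv.Perm α) (x : α) : f (f⁻¹ x) = x :=
  f.apply_symm_apply x

lemma perm_inv_apply_self {α : Type*} (f : Equiv.Perm α) (x : α) : f⁻¹ (f x) = x :=
  f.symm_apply_apply x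

noncomputable def Aset (n t : ℕ) : Finset (Fin (2*n)) :=
  Finset.univ.filter (fun j => j.val < t)

lemma mem_Aset {n t : ℕ} {j : Fin (2*n)} : j ∈ Aset n t ↔ j.val < t := by
  simp [Aset]

lemma card_Aset {n t : ℕ} (h : t ≤ 2*n) : (Aset n t).card = t := by
  classical
  have he : Aset n t = (Finset.univ : Finset (Fin t)).map
      ⟨fun (x : Fin t) => (⟨x.val, by have := x.isLt; omega⟩ : Fin (2*n)),
        by intro a b hab
           simp only [Fin.mk.injEq] at hab
           exact Fin.ext hab⟩ := by
    ext j
    simp only [mem_Aset, Finset.mem_map, Finset.mem_univ, true_and,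
      Function.Embedding.coeFn_mk, Fin.ext_iff]
    constructor
    · intro h1
      exact ⟨⟨j.val, h1⟩, rfl⟩
    · rintro ⟨a, ha⟩
      have := a.isLt
      have ha' : a.val = j.val := ha
      omega
  rw [he, Finset.card_map, Finset.card_univ, Fintype.card_fin]

lemma rev_not_lt {n t : ℕ} (htn : t ≤ n) {j : Fin (2*n)} (hj : j.val < t) :
    ¬ (j.rev.val < t) := by
  have := j.isLt
  rw [Fin.val_rev]
  omega

lemma rev_equivariant_inv {n : ℕ} {π : Equiv.Perm (Fin n)}
    (h : ∀ i, π i.rev = (π i).rev) : ∀ i, π⁻¹ i.rev = (π⁻¹ i).rev := by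
  intro i
  apply π.injective
  rw [perm_apply_inv_self, h, perm_apply_inv_self]

lemma rev_equivariant_mul {n : ℕ} {π ρ : Equiv.Perm (Fin n)}
    (hπ : ∀ i, π i.rev = (π i).rev) (hρ : ∀ i, ρ i.rev = (ρ i).rev) :
    ∀ i, (π * ρ) i.rev = ((π * ρ) i).rev := by
  intro i
  simp only [Equiv.Perm.mul_apply, hρ, hπ]

lemma mem_image_perm {α : Type*} [DecidableEq α] (π : Equiv.Perm α)
    (s : Finset α) (a : α) : π a ∈ s.image π ↔ a ∈ s := by
  simp only [Finset.mem_image]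
  constructor
  · rintro ⟨b, hb, hba⟩; rwa [← π.injective hba]
  · intro ha; exact ⟨a, ha, rfl⟩

lemma mem_image_perm' {α : Type*} [DecidableEq α] (π : Equiv.Perm α)
    (s : Finset α) (y : α) : y ∈ s.image π ↔ π.symm y ∈ s := by
  conv_lhs => rw [show y = π (π.symm y) by simp]
  exact mem_image_perm π s _

lemma image_eq_of_stab {n t : ℕ} (h2n : t ≤ 2*n) (h : Equiv.Perm (Fin (2*n)))
    (hst : ∀ j : Fin (2*n), (j.val < t ↔ (h j).val < t)) :
    (Aset n t).image h = Aset n t := by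
  classical
  apply Finset.eq_of_subset_of_card_le
  · intro y hy
    obtain ⟨x, hx, hxy⟩ := Finset.mem_image.mp hy
    rw [mem_Aset] at hx ⊢
    rw [← hxy]
    exact (hst x).mp hx
  · rw [Finset.card_image_of_injective _ h.injective]

/-! ### Counting lemmas -/

noncomputable def LAset (n t : ℕ) : Finset (Fin (2*n)) :=
  Finset.univ.filter (fun x => t ≤ x.val ∧ x.val < n)

noncomputable def LBset (n : ℕ) (K : Finset (Fin (2*n))) : Finset (Fin (2*n)) :=
  Finset.univ.filter (fun x => x ∉ K ∧ x.rev ∉ K ∧ x.val < n)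

lemma card_LA {n t : ℕ} (htn : t ≤ n) : (LAset n t).card = n - t := by
  classical
  have h : LAset n t =
      (Finset.univ : Finset (Fin (n-t))).map
        ⟨fun (x : Fin (n-t)) => (⟨t + x.val, by have := x.isLt; omega⟩ : Fin (2*n)),
          by intro a b hab
             simp only [Fin.mk.injEq] at hab
             exact Fin.ext (by omega)⟩ := by
    ext j
    simp only [LAset, Finset.mem_filter, Finset.mem_univ, true_and, Finset.mem_map,
      Function.Embedding.coeFn_mk, Fin.ext_iff]
    constructor
    · rintro ⟨h1, h2⟩
      exact ⟨⟨j.val - t, by omega⟩, by show t + (j.val - t) = j.val; omega⟩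
    · rintro ⟨a, ha⟩
      have := a.isLt
      have ha' : t + a.val = j.val := ha
      omega
  rw [h, Finset.card_map, Finset.card_univ, Fintype.card_fin]

lemma card_N {n : ℕ} :
    (Finset.univ.filter (fun (x : Fin (2*n)) => x.val < n)).card = n := by
  classical
  have h : Finset.univ.filter (fun (x : Fin (2*n)) => x.val < n) =
      (Finset.univ : Finset (Fin n)).map
        ⟨fun (x : Fin n) => (⟨x.val, by have := x.isLt; omega⟩ : Fin (2*n)),
          by intro a b hab
             simp only [Fin.mk.injEq] at hab
             exact Fin.ext hab⟩ := by
    ext j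
    simp only [Finset.mem_filter, Finset.mem_univ, true_and, Finset.mem_map,
      Function.Embedding.coeFn_mk, Fin.ext_iff]
    constructor
    · intro h1
      exact ⟨⟨j.val, h1⟩, rfl⟩
    · rintro ⟨a, ha⟩
      have := a.isLt
      have ha' : a.val = j.val := ha
      omega
  rw [h, Finset.card_map, Finset.card_univ, Fintype.card_fin]

lemma card_LB {n t : ℕ} (K : Finset (Fin (2*n)))
    (hadm : ∀ i ∈ K, i.rev ∉ K) (hcard : K.card = t) :
    (LBset n K).card = n - t := by
  classical
  set N : Finset (Fin (2*n)) := Finset.univ.filter (fun (x : Fin (2*n)) => x.val < n)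
    with hN
  have hNcard : N.card = n := card_N
  set B' : Finset (Fin (2*n)) := K.image (fun k => if k.val < n then k else k.rev)
    with hB'
  have hB'sub : B' ⊆ N := by
    intro x hx
    rw [hB'] at hx
    obtain ⟨k, hk, hkx⟩ := Finset.mem_image.mp hx
    rw [hN, Finset.mem_filter]
    refine ⟨Finset.mem_univ _, ?_⟩
    by_cases h : k.val < n
    · rw [if_pos h] at hkx
      rw [← hkx]; exact h
    · rw [if_neg h] at hkx
      have := k.isLt
      rw [← hkx, Fin.val_rev]
      omega
  have hB'card : B'.card = t := by
    rw [hB', Finset.card_image_of_injOn, hcard]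
    intro a ha b hb hab
    simp only at hab
    rw [Finset.mem_coe] at ha hb
    by_cases h1 : a.val < n <;> by_cases h2 : b.val < n
    · rwa [if_pos h1, if_pos h2] at hab
    · rw [if_pos h1, if_neg h2] at hab
      exfalso
      apply hadm a ha
      rw [hab, Fin.rev_rev]
      exact hb
    · rw [if_neg h1, if_pos h2] at hab
      exfalso
      apply hadm b hb
      rw [← hab, Fin.rev_rev]
      exact ha
    · rw [if_neg h1, if_neg h2] at hab
      exact Fin.rev_injective hab
  have key : LBset n K = N \ B' := by
    ext x
    simp only [LBset, Finset.mem_filter, Finset.mem_univ, true_and, Finset.mem_sdiff,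
      hN, hB', Finset.mem_image]
    constructor
    · rintro ⟨h1, h2, h3⟩
      refine ⟨h3, ?_⟩
      rintro ⟨k, hk, hkx⟩
      by_cases h : k.val < n
      · rw [if_pos h] at hkx; exact h1 (hkx ▸ hk)
      · rw [if_neg h] at hkx
        apply h2
        have hx : k = x.rev := by rw [← hkx, Fin.rev_rev]
        rwa [← hx]
    · rintro ⟨h3, h4⟩
      refine ⟨?_, ?_, h3⟩
      · intro hxK
        exact h4 ⟨x, hxK, if_pos h3⟩
      · intro hxK
        refine h4 ⟨x.rev, hxK, ?_⟩
        have := x.isLt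
        rw [if_neg (by rw [Fin.val_rev]; omega), Fin.rev_rev]
  rw [key, Finset.card_sdiff_of_subset hB'sub, hNcard, hB'card]

lemma cardeqLALB {n t : ℕ} (htn : t ≤ n) (K : Finset (Fin (2*n)))
    (hadm : ∀ i ∈ K, i.rev ∉ K) (hcard : K.card = t) :
    (LAset n t).card = (LBset n K).card := by
  rw [card_LA htn, card_LB K hadm hcard]

/-! ### Construction of an equivariant permutation mapping Aset onto K -/

section Construction
variable {n t : ℕ} (htn : t ≤ n) (K : Finset (Fin (2*n)))
  (hadm : ∀ i ∈ K, i.rev ∉ K) (hcard : K.card = t)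

noncomputable def eLK : {x // x ∈ LAset n t} ≃ {x // x ∈ LBset n K} :=
  Finset.equivOfCardEq (cardeqLALB htn K hadm hcard)

noncomputable def tauFun : Fin (2*n) → Fin (2*n) := fun x =>
  if h1 : x.val < t then ((K.orderIsoOfFin hcard) ⟨x.val, h1⟩ : Fin (2*n))
  else if h2 : x.rev.val < t then ((K.orderIsoOfFin hcard) ⟨x.rev.val, h2⟩ : Fin (2*n)).rev
  else if h3 : x.val < n then
    ((eLK htn K hadm hcard) ⟨x, by
      simp only [LAset, Finset.mem_filter]
      exact ⟨Finset.mem_univ _, le_of_not_gt h1, h3⟩⟩ : Fin (2*n))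
  else
    ((eLK htn K hadm hcard) ⟨x.rev, by
      simp only [LAset, Finset.mem_filter]
      refine ⟨Finset.mem_univ _, le_of_not_gt h2, ?_⟩
      have := x.isLt
      rw [Fin.val_rev]
      omega⟩ : Fin (2*n)).rev

noncomputable def gFun : Fin (2*n) → Fin (2*n) := fun y =>
  if k1 : y ∈ K then Fin.castLE (by omega) ((K.orderIsoOfFin hcard).symm ⟨y, k1⟩)
  else if k2 : y.rev ∈ K then
    (Fin.castLE (by omega) ((K.orderIsoOfFin hcard).symm ⟨y.rev, k2⟩)).rev
  else if k3 : y.val < n then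
    ((eLK htn K hadm hcard).symm ⟨y, by
      simp only [LBset, Finset.mem_filter]
      exact ⟨Finset.mem_univ _, k1, k2, k3⟩⟩ : Fin (2*n))
  else
    ((eLK htn K hadm hcard).symm ⟨y.rev, by
      simp only [LBset, Finset.mem_filter]
      refine ⟨Finset.mem_univ _, k2, by rw [Fin.rev_rev]; exact k1, ?_⟩
      have := y.isLt
      rw [Fin.val_rev]
      omega⟩ : Fin (2*n)).rev

lemma gf_id : ∀ x, gFun htn K hadm hcard (tauFun htn K hadm hcard x) = x := by
  intro x
  by_cases h1 : x.val < t
  · rw [tauFun, dif_pos h1, gFun,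
      dif_pos ((K.orderIsoOfFin hcard) ⟨x.val, h1⟩).2]
    show Fin.castLE _ ((K.orderIsoOfFin hcard).symm ((K.orderIsoOfFin hcard) ⟨x.val, h1⟩)) = x
    rw [OrderIso.symm_apply_apply]
    exact Fin.ext rfl
  · by_cases h2 : x.rev.val < t
    · rw [tauFun, dif_neg h1, dif_pos h2]
      set z := (K.orderIsoOfFin hcard) ⟨x.rev.val, h2⟩ with hz
      have hz1 : (↑z : Fin (2*n)).rev ∉ K := hadm _ z.2
      have hz2 : (↑z : Fin (2*n)).rev.rev ∈ K := by rw [Fin.rev_rev]; exact z.2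
      rw [gFun, dif_neg hz1, dif_pos hz2]
      have he : (⟨(↑z : Fin (2*n)).rev.rev, hz2⟩ : {a // a ∈ K}) = z :=
        Subtype.ext (Fin.rev_rev _)
      rw [he, hz, OrderIso.symm_apply_apply]
      have hc : Fin.castLE (by omega : t ≤ 2*n) ⟨x.rev.val, h2⟩ = x.rev := Fin.ext rfl
      rw [hc, Fin.rev_rev]
    · by_cases h3 : x.val < n
      · rw [tauFun, dif_neg h1, dif_neg h2, dif_pos h3]
        set z := (eLK htn K hadm hcard) ⟨x, _⟩ with hz
        have hzLB := z.2
        simp only [LBset, Finset.mem_filter] at hzLB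
        obtain ⟨-, n1, n2, n3⟩ := hzLB
        rw [gFun, dif_neg n1, dif_neg n2, dif_pos n3]
        show ((eLK htn K hadm hcard).symm ((eLK htn K hadm hcard) ⟨x, _⟩) : Fin (2*n)) = x
        rw [Equiv.symm_apply_apply]
      · rw [tauFun, dif_neg h1, dif_neg h2, dif_neg h3]
        set z := (eLK htn K hadm hcard) ⟨x.rev, _⟩ with hz
        have hzLB := z.2
        simp only [LBset, Finset.mem_filter] at hzLB
        obtain ⟨-, n1, n2, n3⟩ := hzLB
        have k1 : (↑z : Fin (2*n)).rev ∉ K := n2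
        have k2 : ¬ ((↑z : Fin (2*n)).rev.rev ∈ K) := by rw [Fin.rev_rev]; exact n1
        have k3 : ¬ ((↑z : Fin (2*n)).rev.val < n) := by
          have := (↑z : Fin (2*n)).isLt
          rw [Fin.val_rev]
          omega
        rw [gFun, dif_neg k1, dif_neg k2, dif_neg k3]
        have he : (⟨(↑z : Fin (2*n)).rev.rev, by rw [Fin.rev_rev]; exact z.2⟩ :
            {a // a ∈ LBset n K}) = z := Subtype.ext (Fin.rev_rev _)
        show ((eLK htn K hadm hcard).symm ⟨(↑z : Fin (2*n)).rev.rev, _⟩ : Fin (2*n)).rev = x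
        rw [he, hz, Equiv.symm_apply_apply, Fin.rev_rev]

lemma tauFun_rev : ∀ x, tauFun htn K hadm hcard x.rev = (tauFun htn K hadm hcard x).rev := by
  intro x
  by_cases h1 : x.val < t
  · have hr1 : ¬ (x.rev.val < t) := by
      have := x.isLt
      rw [Fin.val_rev]
      omega
    have hr2 : x.rev.rev.val < t := by rw [Fin.rev_rev]; exact h1
    rw [show tauFun htn K hadm hcard x.rev =
      ((K.orderIsoOfFin hcard) ⟨x.rev.rev.val, hr2⟩ : Fin (2*n)).rev by
        rw [tauFun, dif_neg hr1, dif_pos hr2],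
      tauFun, dif_pos h1]
    exact congrArg Fin.rev (congrArg Subtype.val
      (congrArg (K.orderIsoOfFin hcard)
        (Fin.ext (show x.rev.rev.val = x.val by rw [Fin.rev_rev]))))
  · by_cases h2 : x.rev.val < t
    · rw [show tauFun htn K hadm hcard x.rev =
        ((K.orderIsoOfFin hcard) ⟨x.rev.val, h2⟩ : Fin (2*n)) by
          rw [tauFun, dif_pos h2],
        tauFun, dif_neg h1, dif_pos h2, Fin.rev_rev]
    · by_cases h3 : x.val < n
      · have hr1 : ¬ (x.rev.val < t) := h2
        have hr2 : ¬ (x.rev.rev.val < t) := by rw [Fin.rev_rev]; exact h1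
        have hr3 : ¬ (x.rev.val < n) := by
          have := x.isLt
          rw [Fin.val_rev]
          omega
        rw [show tauFun htn K hadm hcard x.rev =
          ((eLK htn K hadm hcard) ⟨x.rev.rev, by
            simp only [LAset, Finset.mem_filter]
            refine ⟨Finset.mem_univ _, le_of_not_gt hr2, ?_⟩
            rw [Fin.rev_rev]; exact h3⟩ : Fin (2*n)).rev by
            rw [tauFun, dif_neg hr1, dif_neg hr2, dif_neg hr3],
          tauFun, dif_neg h1, dif_neg h2, dif_pos h3]
        exact congrArg Fin.rev (congrArg Subtype.val
          (congrArg (eLK htn K hadm hcard) (Subtype.ext (Fin.rev_rev x))))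
      · have hr1 : ¬ (x.rev.val < t) := h2
        have hr2 : ¬ (x.rev.rev.val < t) := by rw [Fin.rev_rev]; exact h1
        have hr3 : x.rev.val < n := by
          have := x.isLt
          rw [Fin.val_rev]
          omega
        rw [show tauFun htn K hadm hcard x.rev =
          ((eLK htn K hadm hcard) ⟨x.rev, by
            simp only [LAset, Finset.mem_filter]
            exact ⟨Finset.mem_univ _, le_of_not_gt hr1, hr3⟩⟩ : Fin (2*n)) by
            rw [tauFun, dif_neg hr1, dif_neg hr2, dif_pos hr3],
          tauFun, dif_neg h1, dif_neg h2, dif_neg h3, Fin.rev_rev]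

end Construction

lemma exists_tau {n t : ℕ} (htn : t ≤ n) (K : Finset (Fin (2*n)))
    (hadm : ∀ i ∈ K, i.rev ∉ K) (hcard : K.card = t) :
    ∃ τ : Equiv.Perm (Fin (2*n)), (∀ i, τ i.rev = (τ i).rev) ∧
      (Aset n t).image τ = K := by
  classical
  have hinj : Function.Injective (tauFun htn K hadm hcard) :=
    Function.LeftInverse.injective (gf_id htn K hadm hcard)
  have hbij : Function.Bijective (tauFun htn K hadm hcard) :=
    Finite.injective_iff_bijective.mp hinj
  refine ⟨Equiv.ofBijective _ hbij, fun i => tauFun_rev htn K hadm hcard i, ?_⟩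
  have hsub : (Aset n t).image (Equiv.ofBijective _ hbij) ⊆ K := by
    intro y hy
    obtain ⟨x, hx, hxy⟩ := Finset.mem_image.mp hy
    rw [mem_Aset] at hx
    rw [← hxy]
    show tauFun htn K hadm hcard x ∈ K
    rw [tauFun, dif_pos hx]
    exact ((K.orderIsoOfFin hcard) ⟨x.val, hx⟩).2
  apply Finset.eq_of_subset_of_card_le hsub
  rw [Finset.card_image_of_injective _ (Equiv.injective _), card_Aset (by omega), hcard]

lemma restrict_conj {n t : ℕ} (htn : t ≤ n)
    (σ τ : Equiv.Perm (Fin (2*n))) (K : Finset (Fin (2*n)))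
    (hKc : K.card = t) (hKσ : K.image σ = K)
    (hstab : ∀ j : Fin (2*n), ((j : ℕ) < t ↔ (((τ⁻¹ * σ * τ) j : ℕ) < t)))
    (him : (Aset n t).image τ = K) :
    ∃ c : Equiv.Perm (Fin t),
      restrictPerm (2*n) t (τ⁻¹ * σ * τ) = c⁻¹ * permOnSubset t σ K * c := by
  classical
  have hpq : ∀ a : Fin (2*n), a.val < t ↔ τ a ∈ K := by
    intro a
    rw [← him]
    constructor
    · intro ha
      exact Finset.mem_image_of_mem _ (mem_Aset.mpr ha)
    · intro ha
      obtain ⟨b, hb, hba⟩ := Finset.mem_image.mp ha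
      rw [← τ.injective hba]
      exact mem_Aset.mp hb
  let u : Fin t ≃ {j : Fin (2*n) // (j : ℕ) < t} :=
    { toFun := fun j => ⟨⟨j.val, by omega⟩, j.isLt⟩
      invFun := fun x => ⟨(x.1 : ℕ), x.2⟩
      left_inv := fun _ => rfl
      right_inv := fun _ => rfl }
  let s : {j : Fin (2*n) // (j : ℕ) < t} ≃ {x // x ∈ K} :=
    Equiv.subtypeEquiv (τ : Equiv (Fin (2*n)) (Fin (2*n))) hpq
  let c : Equiv.Perm (Fin t) := (u.trans s).trans (K.orderIsoOfFin hKc).toEquiv.symm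
  refine ⟨c, ?_⟩
  have hmain : ∀ j, c (restrictPerm (2*n) t (τ⁻¹*σ*τ) j) = permOnSubset t σ K (c j) := by
    intro j
    rw [restrictPerm, dif_pos ⟨(by omega : t ≤ 2*n), hstab⟩, permOnSubset,
      dif_pos ⟨hKc, hKσ⟩]
    simp only [c, u, s, Equiv.permCongr_apply, Equiv.trans_apply, Equiv.coe_fn_mk,
      Equiv.coe_fn_symm_mk, Equiv.subtypeEquiv_apply, Equiv.symm_symm,
      Equiv.Perm.subtypePerm_apply, Equiv.apply_symm_apply, Equiv.Perm.mul_apply,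
      perm_inv_apply_self, perm_apply_inv_self]
    refine congrArg _ (Subtype.ext ?_)
    show τ (τ⁻¹ (σ (τ ⟨(j : ℕ), by omega⟩))) = σ (τ ⟨(j : ℕ), by omega⟩)
    exact perm_apply_inv_self τ _
  apply Equiv.ext
  intro j
  have h1 := hmain j
  have h2 : (c⁻¹ * permOnSubset t σ K * c) j = c⁻¹ (permOnSubset t σ K (c j)) := rfl
  rw [h2, ← h1]
  exact (Equiv.symm_apply_apply c _).symm

lemma rev_conj {n : ℕ} {σ τ : Equiv.Perm (Fin n)}
    (hσ : ∀ i, σ i.rev = (σ i).rev) (hτ : ∀ i, τ i.rev = (τ i).rev) :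
    ∀ i, (τ⁻¹ * σ * τ) i.rev = ((τ⁻¹ * σ * τ) i).rev :=
  rev_equivariant_mul (rev_equivariant_mul (rev_equivariant_inv hτ) hσ) hτ

lemma lt_iff_image_mem {n t : ℕ} {τ : Equiv.Perm (Fin (2*n))} {K : Finset (Fin (2*n))}
    (him : (Aset n t).image τ = K) (a : Fin (2*n)) : a.val < t ↔ τ a ∈ K := by
  rw [← him, mem_image_perm τ (Aset n t) a, mem_Aset]

lemma mem_iff_apply_mem {n : ℕ} {σ : Equiv.Perm (Fin (2*n))} {K : Finset (Fin (2*n))}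
    (hKσ : K.image σ = K) (x : Fin (2*n)) : x ∈ K ↔ σ x ∈ K := by
  have := mem_image_perm σ K x
  rw [hKσ] at this
  exact this.symm

lemma stab_of_image {n t : ℕ} {σ τ : Equiv.Perm (Fin (2*n))} {K : Finset (Fin (2*n))}
    (hKσ : K.image σ = K) (him : (Aset n t).image τ = K) :
    ∀ j : Fin (2*n), ((j : ℕ) < t ↔ (((τ⁻¹ * σ * τ) j : ℕ) < t)) := by
  intro j
  simp only [Equiv.Perm.mul_apply]
  rw [lt_iff_image_mem him j, mem_iff_apply_mem hKσ (τ j)]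
  have h := lt_iff_image_mem him (τ⁻¹ (σ (τ j)))
  rw [perm_apply_inv_self] at h
  exact h.symm

theorem stmt10 (n t : ℕ) (hn : 1 ≤ n) (htn : t ≤ n)
    (χ : Equiv.Perm (Fin t) → ℂ)
    (hχ : ∀ g h : Equiv.Perm (Fin t), χ (h * g * h⁻¹) = χ g)
    (σ : Equiv.Perm (Fin (2 * n))) (hσ : ∀ i, σ i.rev = (σ i).rev) :
    ∑ K ∈ Finset.univ.filter (fun K : Finset (Fin (2 * n)) =>
        (∀ i ∈ K, i.rev ∉ K) ∧ K.card = t ∧ K.image σ = K),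
      χ (permOnSubset t σ K) =
    (1 / ((Finset.univ.filter (fun τ : Equiv.Perm (Fin (2 * n)) =>
          (∀ i, τ i.rev = (τ i).rev) ∧
            ∀ j : Fin (2 * n), ((j : ℕ) < t ↔ ((τ j : ℕ) < t)))).card : ℂ)) *
      ∑ τ ∈ Finset.univ.filter (fun τ : Equiv.Perm (Fin (2 * n)) =>
          (∀ i, τ i.rev = (τ i).rev) ∧
            (∀ i, (τ⁻¹ * σ * τ) i.rev = ((τ⁻¹ * σ * τ) i).rev) ∧
            ∀ j : Fin (2 * n), ((j : ℕ) < t ↔ (((τ⁻¹ * σ * τ) j : ℕ) < t))),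
        χ (restrictPerm (2 * n) t (τ⁻¹ * σ * τ)) := by
  classical
  have ht2n : t ≤ 2*n := by omega
  set Hset : Finset (Equiv.Perm (Fin (2 * n))) :=
    Finset.univ.filter (fun τ : Equiv.Perm (Fin (2 * n)) =>
      (∀ i, τ i.rev = (τ i).rev) ∧
        ∀ j : Fin (2 * n), ((j : ℕ) < t ↔ ((τ j : ℕ) < t))) with hHset
  set Sset : Finset (Finset (Fin (2 * n))) :=
    Finset.univ.filter (fun K : Finset (Fin (2 * n)) =>
      (∀ i ∈ K, i.rev ∉ K) ∧ K.card = t ∧ K.image σ = K) with hSset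
  set Tset : Finset (Equiv.Perm (Fin (2 * n))) :=
    Finset.univ.filter (fun τ : Equiv.Perm (Fin (2 * n)) =>
      (∀ i, τ i.rev = (τ i).rev) ∧
        (∀ i, (τ⁻¹ * σ * τ) i.rev = ((τ⁻¹ * σ * τ) i).rev) ∧
        ∀ j : Fin (2 * n), ((j : ℕ) < t ↔ (((τ⁻¹ * σ * τ) j : ℕ) < t))) with hTset
  have hHne : ((Hset.card : ℂ)) ≠ 0 := by
    have h1 : (1 : Equiv.Perm (Fin (2*n))) ∈ Hset := by
      rw [hHset, Finset.mem_filter]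
      exact ⟨Finset.mem_univ _, fun i => rfl, fun j => Iff.rfl⟩
    have hpos : 0 < Hset.card := Finset.card_pos.mpr ⟨1, h1⟩
    exact Nat.cast_ne_zero.mpr hpos.ne'
  -- the fiber map
  have hmaps : ∀ τ' ∈ Tset, (Aset n t).image τ' ∈ Sset := by
    intro τ' hτ'
    obtain ⟨hrev, hrev2, hstab⟩ := (Finset.mem_filter.mp hτ').2
    rw [hSset, Finset.mem_filter]
    refine ⟨Finset.mem_univ _, ?_, ?_, ?_⟩
    · intro i hi hirev
      obtain ⟨a, ha, rfl⟩ := Finset.mem_image.mp hi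
      obtain ⟨b, hb, hba⟩ := Finset.mem_image.mp hirev
      rw [← hrev a] at hba
      have hbrev : b = a.rev := τ'.injective hba
      exact rev_not_lt htn (mem_Aset.mp ha) (mem_Aset.mp (hbrev ▸ hb))
    · rw [Finset.card_image_of_injective _ τ'.injective, card_Aset ht2n]
    · apply Finset.eq_of_subset_of_card_le
      · intro y hy
        obtain ⟨x, hx, hxy⟩ := Finset.mem_image.mp hy
        obtain ⟨a, ha, rfl⟩ := Finset.mem_image.mp hx
        have haA : ((τ'⁻¹ * σ * τ') a) ∈ Aset n t := by
          rw [mem_Aset]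
          exact (hstab a).mp (mem_Aset.mp ha)
        rw [← hxy]
        refine Finset.mem_image.mpr ⟨(τ'⁻¹ * σ * τ') a, haA, ?_⟩
        show τ' (τ'⁻¹ (σ (τ' a))) = σ (τ' a)
        exact perm_apply_inv_self τ' _
      · rw [Finset.card_image_of_injective _ σ.injective]
    
  -- fibers have constant size Hset.card
  have hfiber : ∀ K ∈ Sset,
      (Tset.filter (fun τ' : Equiv.Perm (Fin (2*n)) => (Aset n t).image ⇑τ' = K)).card
        = Hset.card := by
    intro K hK
    obtain ⟨hadm, hKc, hKσ⟩ := (Finset.mem_filter.mp hK).2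
    obtain ⟨τ₀, hτ₀rev, hτ₀im⟩ := exists_tau htn K hadm hKc
    refine (Finset.card_bij (fun h _ => τ₀ * h) ?_ ?_ ?_).symm
    · -- maps Hset into the fiber
      intro h hh
      obtain ⟨hhrev, hhstab⟩ := (Finset.mem_filter.mp hh).2
      have hcomp : ⇑(τ₀ * h) = ⇑τ₀ ∘ ⇑h := rfl
      have himh : (Aset n t).image (τ₀ * h) = K := by
        rw [hcomp, ← Finset.image_image, image_eq_of_stab ht2n h hhstab, hτ₀im]
      have hrevh : ∀ i, (τ₀ * h) i.rev = ((τ₀ * h) i).rev :=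
        rev_equivariant_mul hτ₀rev hhrev
      rw [Finset.mem_filter]
      refine ⟨?_, himh⟩
      rw [hTset, Finset.mem_filter]
      exact ⟨Finset.mem_univ _, hrevh, rev_conj hσ hrevh, stab_of_image hKσ himh⟩
    · intro a _ b _ hab
      exact mul_left_cancel hab
    · -- surjective
      intro τ' hτ'
      rw [Finset.mem_filter] at hτ'
      obtain ⟨hτT, him⟩ := hτ'
      obtain ⟨hrev, hrev2, hstab⟩ := (Finset.mem_filter.mp hτT).2
      refine ⟨τ₀⁻¹ * τ', ?_, by group⟩
      rw [hHset, Finset.mem_filter]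
      refine ⟨Finset.mem_univ _, rev_equivariant_mul (rev_equivariant_inv hτ₀rev) hrev, ?_⟩
      intro j
      rw [lt_iff_image_mem him j]
      have h := lt_iff_image_mem hτ₀im (τ₀⁻¹ (τ' j))
      rw [perm_apply_inv_self] at h
      exact h.symm
  -- the main computation
  have hsum : ∑ τ ∈ Tset, χ (restrictPerm (2 * n) t (τ⁻¹ * σ * τ)) =
      (Hset.card : ℂ) * ∑ K ∈ Sset, χ (permOnSubset t σ K) := by
    rw [← Finset.sum_fiberwise_of_maps_to hmaps
      (fun τ' => χ (restrictPerm (2 * n) t (τ'⁻¹ * σ * τ'))), Finset.mul_sum]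
    apply Finset.sum_congr rfl
    intro K hK
    obtain ⟨hadm, hKc, hKσ⟩ := (Finset.mem_filter.mp hK).2
    have hconst : ∀ τ' ∈ Tset.filter
        (fun τ' : Equiv.Perm (Fin (2*n)) => (Aset n t).image ⇑τ' = K),
        χ (restrictPerm (2 * n) t (τ'⁻¹ * σ * τ')) = χ (permOnSubset t σ K) := by
      intro τ' hτ'
      rw [Finset.mem_filter] at hτ'
      obtain ⟨hτT, him⟩ := hτ'
      obtain ⟨hrev, hrev2, hstab⟩ := (Finset.mem_filter.mp hτT).2
      obtain ⟨c, hc⟩ := restrict_conj htn σ τ' K hKc hKσ hstab him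
      rw [hc]
      have := hχ (permOnSubset t σ K) c⁻¹
      rwa [inv_inv] at this
    rw [Finset.sum_congr rfl hconst, Finset.sum_const, hfiber K hK, nsmul_eq_mul]
  rw [hsum, one_div, inv_mul_cancel_left₀ hHne]
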